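/- Let P and Q be probability measures on a common measurable space with P ≪ Q, r = dP/dQ, and suppose r(W) has an atomless distribution for W ∼ Q. If W and W' are independent and identically distributed with law Q, then 1/2 − E[r(W')·1{r(W') < r(W)}] = (1/4)·E|r(W) − r(W')|. -/

import Mathlib

open MeasureTheory ProbabilityTheory

/-- For `P ≪ Q` with Radon–Nikodym derivative `r` atomless under `Q`,
and `W, W'` i.i.d. with law `Q` (here `W = q.1`, `W' = q.2` on `Q.prod Q`):
`1/2 − E[r(W')·1{r(W') < r(W)}] = (1/4)·E|r(W) − r(W')|`. -/
theorem stmt_1 {α : Type*} [MeasurableSpace α]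
    (P Q : Measure α) [IsProbabilityMeasure P] [IsProbabilityMeasure Q]
    (hac : P ≪ Q)
    (r : α → ℝ) (hr : r = fun x => (P.rnDeriv Q x).toReal)
    (hcont : ∀ t : ℝ, Q {x | r x = t} = 0) :
    1 / 2 - (∫ q, (if r q.2 < r q.1 then r q.2 else 0) ∂(Q.prod Q))
      = (1 / 4) * ∫ q, |r q.1 - r q.2| ∂(Q.prod Q) := by
  have hrm : Measurable r := by
    rw [hr]; exact (Measure.measurable_rnDeriv P Q).ennreal_toReal
  have hrnn : ∀ x, 0 ≤ r x := by
    intro x; rw [hr]; exact ENNReal.toReal_nonneg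
  have hint : Integrable r Q := by
    rw [hr]; exact Measure.integrable_toReal_rnDeriv
  have hEr : ∫ x, r x ∂Q = 1 := by
    rw [hr, Measure.integral_toReal_rnDeriv hac, probReal_univ]
  set μ := Q.prod Q with hμ
  have hmapf : μ.map Prod.fst = Q := by simp [hμ]
  have hmaps : μ.map Prod.snd = Q := by simp [hμ]
  have hf : Measurable fun q : α × α => r q.1 := hrm.comp measurable_fst
  have hg : Measurable fun q : α × α => r q.2 := hrm.comp measurable_snd
  have hif : Integrable (fun q : α × α => r q.1) μ := by
    have h1 : Integrable r (μ.map Prod.fst) := hmapf ▸ hint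
    exact (integrable_map_measure hrm.aestronglyMeasurable
      measurable_fst.aemeasurable).mp h1
  have hig : Integrable (fun q : α × α => r q.2) μ := by
    have h1 : Integrable r (μ.map Prod.snd) := hmaps ▸ hint
    exact (integrable_map_measure hrm.aestronglyMeasurable
      measurable_snd.aemeasurable).mp h1
  have hEf : ∫ q, r q.1 ∂μ = 1 := by
    rw [← hEr, ← hmapf, integral_map measurable_fst.aemeasurable hrm.aestronglyMeasurable]
  have hEg : ∫ q, r q.2 ∂μ = 1 := by
    rw [← hEr, ← hmaps, integral_map measurable_snd.aemeasurable hrm.aestronglyMeasurable]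
  -- the diagonal is null
  have hnull : μ {q : α × α | r q.1 = r q.2} = 0 := by
    have hs : MeasurableSet {q : α × α | r q.1 = r q.2} := measurableSet_eq_fun hf hg
    rw [hμ, Measure.prod_apply hs]
    have h0 : ∀ x : α, Q {a | r x = r a} = 0 := by
      intro x
      have he : {a | r x = r a} = {y | r y = r x} := by ext y; exact eq_comm
      rw [he]; exact hcont (r x)
    simp [h0]
  have hae : ∀ᵐ q ∂μ, r q.1 ≠ r q.2 := by
    rw [ae_iff]
    simpa using hnull
  -- integrability of truncated pieces
  have hiA : Integrable (fun q : α × α => if r q.2 < r q.1 then r q.2 else 0) μ := by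
    refine hig.mono ((hg.ite (measurableSet_lt hg hf) measurable_const).aestronglyMeasurable) ?_
    filter_upwards with q
    by_cases hq : r q.2 < r q.1 <;> simp [hq]
  have hiB : Integrable (fun q : α × α => if r q.1 ≤ r q.2 then r q.1 else 0) μ := by
    refine hif.mono ((hf.ite (measurableSet_le hf hg) measurable_const).aestronglyMeasurable) ?_
    filter_upwards with q
    by_cases hq : r q.1 ≤ r q.2 <;> simp [hq]
  have himin : Integrable (fun q : α × α => min (r q.1) (r q.2)) μ := by
    refine hif.mono ((hf.min hg).aestronglyMeasurable) ?_
    filter_upwards with q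
    rw [Real.norm_eq_abs, Real.norm_eq_abs, abs_of_nonneg (le_min (hrnn _) (hrnn _)),
      abs_of_nonneg (hrnn _)]
    exact min_le_left _ _
  set A := ∫ q, (if r q.2 < r q.1 then r q.2 else 0) ∂μ with hA
  -- min decomposition
  have hmin : (fun q : α × α => min (r q.1) (r q.2))
      = fun q => (if r q.2 < r q.1 then r q.2 else 0) + (if r q.1 ≤ r q.2 then r q.1 else 0) := by
    funext q
    rcases lt_or_ge (r q.2) (r q.1) with h | h
    · rw [if_pos h, if_neg (not_le.mpr h), min_eq_right h.le, add_zero]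
    · rw [if_neg (not_lt.mpr h), if_pos h, min_eq_left h, zero_add]
  -- symmetry
  have hswap : ∫ q, (if r q.1 ≤ r q.2 then r q.1 else 0) ∂μ
      = ∫ q, (if r q.2 ≤ r q.1 then r q.2 else 0) ∂μ := by
    rw [hμ, ← integral_prod_swap (fun q : α × α => if r q.2 ≤ r q.1 then r q.2 else 0)]
    rfl
  -- a.e. equality of ≤ and < pieces
  have haeeq : ∫ q, (if r q.2 ≤ r q.1 then r q.2 else 0) ∂μ = A := by
    rw [hA]
    refine integral_congr_ae ?_
    filter_upwards [hae] with q hq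
    have : (r q.2 ≤ r q.1) ↔ (r q.2 < r q.1) := by
      constructor
      · intro h; exact lt_of_le_of_ne h (Ne.symm hq)
      · exact le_of_lt
    simp [this]
  have hImin : ∫ q, min (r q.1) (r q.2) ∂μ = 2 * A := by
    rw [hmin, integral_add hiA hiB, hswap, haeeq, ← hA]; ring
  -- |a - b| = a + b - 2 * min a b
  have habs : (fun q : α × α => |r q.1 - r q.2|)
      = fun q => (r q.1 + r q.2) - 2 * min (r q.1) (r q.2) := by
    funext q
    rcases le_total (r q.1) (r q.2) with h | h
    · rw [abs_of_nonpos (by linarith), min_eq_left h]; ring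
    · rw [abs_of_nonneg (by linarith), min_eq_right h]; ring
  have hIabs : ∫ q, |r q.1 - r q.2| ∂μ = 2 - 4 * A := by
    have h1 : Integrable (fun q : α × α => r q.1 + r q.2) μ := hif.add hig
    have h2 : Integrable (fun q : α × α => 2 * min (r q.1) (r q.2)) μ := himin.const_mul 2
    rw [habs, integral_sub h1 h2, integral_add hif hig, integral_const_mul, hImin, hEf, hEg]
    ring
  rw [hIabs]
  ring
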